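/- The set of points c=(c_i,c_j,c_k)∈ℚ³ such that |c|>|c_k|>0 and c_k/|c|∈ℚ is dense in ℝ³. -/

import Mathlib

noncomputable section

def cc (x : ℝ) : ℝ := (1 - x ^ 2) / (1 + x ^ 2)
def sn (x : ℝ) : ℝ := 2 * x / (1 + x ^ 2)

lemma one_add_sq_pos (x : ℝ) : (0:ℝ) < 1 + x ^ 2 := by positivity

lemma cc_cont : Continuous cc :=
  Continuous.div (by continuity) (by continuity) (fun x => (one_add_sq_pos x).ne')

lemma sn_cont : Continuous sn :=
  Continuous.div (by continuity) (by continuity) (fun x => (one_add_sq_pos x).ne')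

lemma cs_sq (x : ℝ) : cc x ^ 2 + sn x ^ 2 = 1 := by
  unfold cc sn
  have h := (one_add_sq_pos x).ne'
  field_simp
  ring

lemma half_c {C S : ℝ} (h : C ^ 2 + S ^ 2 = 1) (hC : -1 < C) :
    cc (S / (1 + C)) = C ∧ sn (S / (1 + C)) = S := by
  have h1 : (1 : ℝ) + C ≠ 0 := by linarith
  have h0 : (0:ℝ) < 1 + C := by linarith
  have hm : 1 + (S / (1 + C)) ^ 2 = 2 / (1 + C) := by
    field_simp
    linear_combination h
  have hnum : 1 - (S / (1 + C)) ^ 2 = 2 * C / (1 + C) := by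
    field_simp
    linear_combination -h
  have h2 : (2:ℝ) / (1 + C) ≠ 0 := by positivity
  constructor
  · unfold cc
    rw [hm, hnum]
    field_simp
  · unfold sn
    rw [hm]
    field_simp

def G (p : Fin 3 → ℝ) : Fin 3 → ℝ :=
  ![p 0 * cc (p 1) * cc (p 2), p 0 * cc (p 1) * sn (p 2), p 0 * sn (p 1)]

lemma G_cont : Continuous G := by
  apply continuous_pi
  intro i
  fin_cases i <;> simp only [G, Matrix.cons_val_zero, Matrix.cons_val_one, Matrix.head_cons,
    Matrix.cons_val_two, Matrix.tail_cons]
  · exact ((continuous_apply 0).mul (cc_cont.comp (continuous_apply 1))).mul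
      (cc_cont.comp (continuous_apply 2))
  · exact ((continuous_apply 0).mul (cc_cont.comp (continuous_apply 1))).mul
      (sn_cont.comp (continuous_apply 2))
  · exact (continuous_apply 0).mul (sn_cont.comp (continuous_apply 1))

lemma G_sum_sq (p : Fin 3 → ℝ) :
    (G p 0) ^ 2 + (G p 1) ^ 2 + (G p 2) ^ 2 = (p 0) ^ 2 := by
  have h1 := cs_sq (p 1)
  have h2 := cs_sq (p 2)
  simp only [G, Matrix.cons_val_zero, Matrix.cons_val_one, Matrix.head_cons,
    Matrix.cons_val_two, Matrix.tail_cons]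
  linear_combination ((p 0)^2 * (cc (p 1))^2) * h2 + (p 0)^2 * h1

lemma G_surj (v : Fin 3 → ℝ) (hv : v 0 ≠ 0) : ∃ p, G p = v := by
  obtain ⟨σ, hσ2, hσv0⟩ : ∃ σ : ℝ, σ ^ 2 = 1 ∧ 0 < σ * v 0 := by
    rcases hv.lt_or_gt with h | h
    · exact ⟨-1, by norm_num, by nlinarith⟩
    · exact ⟨1, by norm_num, by nlinarith⟩
  obtain ⟨r, hrpos, hr2⟩ : ∃ r : ℝ, 0 < r ∧ r ^ 2 = (v 0)^2 + (v 1)^2 + (v 2)^2 :=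
    ⟨Real.sqrt _, Real.sqrt_pos.mpr (by positivity), Real.sq_sqrt (by positivity)⟩
  have hrne : r ≠ 0 := hrpos.ne'
  set u0 : ℝ := σ * v 0 / r with hu0def
  set u1 : ℝ := σ * v 1 / r with hu1def
  set u2 : ℝ := σ * v 2 / r with hu2def
  have hu0 : 0 < u0 := by rw [hu0def]; positivity
  have husum : u0 ^ 2 + u1 ^ 2 + u2 ^ 2 = 1 := by
    have : u0 ^ 2 + u1 ^ 2 + u2 ^ 2 = σ ^ 2 * ((v 0)^2 + (v 1)^2 + (v 2)^2) / r ^ 2 := by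
      rw [hu0def, hu1def, hu2def]; ring
    rw [this, hσ2, one_mul, ← hr2, div_self (by positivity)]
  obtain ⟨C1, hC1pos, hC1sq⟩ : ∃ C1 : ℝ, 0 < C1 ∧ C1 ^ 2 = u0 ^ 2 + u1 ^ 2 :=
    ⟨Real.sqrt _, Real.sqrt_pos.mpr (by positivity), Real.sq_sqrt (by positivity)⟩
  have hC1ne : C1 ≠ 0 := hC1pos.ne'
  have hpy : C1 ^ 2 + u2 ^ 2 = 1 := by rw [hC1sq]; linarith
  have h1 := half_c hpy (by linarith)
  set m1 : ℝ := u2 / (1 + C1) with hm1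
  set C2 : ℝ := u0 / C1 with hC2
  set S2 : ℝ := u1 / C1 with hS2
  have hC2pos : 0 < C2 := by rw [hC2]; positivity
  have hpy2 : C2 ^ 2 + S2 ^ 2 = 1 := by
    rw [hC2, hS2]
    field_simp
    linarith [hC1sq]
  have h2 := half_c hpy2 (by linarith)
  set m2 : ℝ := S2 / (1 + C2) with hm2
  refine ⟨![σ * r, m1, m2], ?_⟩
  funext i
  fin_cases i
  · show σ * r * cc m1 * cc m2 = v 0
    rw [h1.1, h2.1, hC2, hu0def]
    field_simp
    linear_combination hσ2
  · show σ * r * cc m1 * sn m2 = v 1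
    rw [h1.1, h2.2, hS2, hu1def]
    field_simp
    linear_combination v 1 * hσ2
  · show σ * r * sn m1 = v 2
    rw [h1.2, hu2def]
    field_simp
    linear_combination v 2 * hσ2

end

noncomputable section

lemma G_mem (p : Fin 3 → ℝ) (hq : ∀ i, ∃ q : ℚ, p i = (q : ℝ))
    (h0 : p 0 ≠ 0) (h1 : p 1 ≠ 0) (h1' : p 1 ≠ 1) (h1'' : p 1 ≠ -1) :
    (∀ i, ∃ q : ℚ, G p i = (q : ℝ)) ∧
      Real.sqrt ((G p 0) ^ 2 + (G p 1) ^ 2 + (G p 2) ^ 2) > |G p 2| ∧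
      |G p 2| > 0 ∧
      ∃ q : ℚ, G p 2 / Real.sqrt ((G p 0) ^ 2 + (G p 1) ^ 2 + (G p 2) ^ 2) = (q : ℝ) := by
  obtain ⟨q0, e0⟩ := hq 0
  obtain ⟨q1, e1⟩ := hq 1
  obtain ⟨q2, e2⟩ := hq 2
  have hsqrt : Real.sqrt ((G p 0) ^ 2 + (G p 1) ^ 2 + (G p 2) ^ 2) = |p 0| := by
    rw [G_sum_sq]; exact Real.sqrt_sq_eq_abs _
  have hG0 : G p 0 = p 0 * cc (p 1) * cc (p 2) := by
    simp [G, Matrix.cons_val_zero]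
  have hG1 : G p 1 = p 0 * cc (p 1) * sn (p 2) := by
    simp [G, Matrix.cons_val_one, Matrix.head_cons]
  have hG2 : G p 2 = p 0 * sn (p 1) := by
    simp [G, Matrix.cons_val_two, Matrix.tail_cons]
  have hp1 : (0:ℝ) < 1 + (p 1) ^ 2 := one_add_sq_pos _
  have hs1 : |sn (p 1)| < 1 := by
    rw [abs_lt]
    unfold sn
    constructor
    · rw [lt_div_iff₀ hp1]
      nlinarith [sq_pos_of_ne_zero (a := p 1 + 1) (fun h => h1'' (by linarith))]
    · rw [div_lt_iff₀ hp1]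
      nlinarith [sq_pos_of_ne_zero (a := p 1 - 1) (fun h => h1' (by linarith))]
  have hsn0 : sn (p 1) ≠ 0 :=
    div_ne_zero (mul_ne_zero two_ne_zero h1) (one_add_sq_pos (p 1)).ne'
  have habs2 : |G p 2| = |p 0| * |sn (p 1)| := by rw [hG2, abs_mul]
  have h0pos : 0 < |p 0| := abs_pos.mpr h0
  refine ⟨?_, ?_, ?_, ?_⟩
  · intro i
    fin_cases i
    · exact ⟨q0 * ((1 - q1 ^ 2) / (1 + q1 ^ 2)) * ((1 - q2 ^ 2) / (1 + q2 ^ 2)), by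
        show G p 0 = _
        rw [hG0, e0, e1, e2]; unfold cc; push_cast; ring⟩
    · exact ⟨q0 * ((1 - q1 ^ 2) / (1 + q1 ^ 2)) * (2 * q2 / (1 + q2 ^ 2)), by
        show G p 1 = _
        rw [hG1, e0, e1, e2]; unfold cc sn; push_cast; ring⟩
    · exact ⟨q0 * (2 * q1 / (1 + q1 ^ 2)), by
        show G p 2 = _
        rw [hG2, e0, e1]; unfold sn; push_cast; ring⟩
  · rw [hsqrt, habs2]
    nlinarith
  · rw [habs2]
    positivity
  · refine ⟨q0 * (2 * q1 / (1 + q1 ^ 2)) / |q0|, ?_⟩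
    rw [hsqrt, hG2, e0, e1]
    unfold sn
    push_cast [Rat.cast_abs]
    ring

end

theorem stmt_18 :
    Dense {c : Fin 3 → ℝ |
      (∀ i, ∃ q : ℚ, c i = (q : ℝ)) ∧
      Real.sqrt ((c 0) ^ 2 + (c 1) ^ 2 + (c 2) ^ 2) > |c 2| ∧
      |c 2| > 0 ∧
      ∃ q : ℚ, c 2 / Real.sqrt ((c 0) ^ 2 + (c 1) ^ 2 + (c 2) ^ 2) = (q : ℝ)} := by
  have hQ : Dense (Set.range ((↑) : ℚ → ℝ)) := Rat.denseRange_cast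
  set t : Fin 3 → Set ℝ := ![((Set.range ((↑) : ℚ → ℝ)) \ {0}),
    ((((Set.range ((↑) : ℚ → ℝ)) \ {0}) \ {1}) \ {-1}),
    Set.range ((↑) : ℚ → ℝ)] with ht
  have hD : Dense (Set.pi Set.univ t) := by
    apply dense_pi
    intro i _
    fin_cases i
    · exact hQ.diff_singleton 0
    · exact ((hQ.diff_singleton 0).diff_singleton 1).diff_singleton (-1)
    · exact hQ
  have hne : Dense {v : Fin 3 → ℝ | v 0 ≠ 0} := by
    have : {v : Fin 3 → ℝ | v 0 ≠ 0} =
        Set.pi Set.univ ![({0}ᶜ : Set ℝ), Set.univ, Set.univ] := by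
      ext v
      simp [Set.mem_pi, Fin.forall_fin_succ]
    rw [this]
    apply dense_pi
    intro i _
    fin_cases i
    · exact dense_compl_singleton 0
    · exact dense_univ
    · exact dense_univ
  have h2 : G '' Set.univ ⊆ closure (G '' Set.pi Set.univ t) :=
    calc G '' Set.univ = G '' closure (Set.pi Set.univ t) := by rw [hD.closure_eq]
      _ ⊆ closure (G '' Set.pi Set.univ t) := image_closure_subset_closure_image G_cont
  have hsub : {v : Fin 3 → ℝ | v 0 ≠ 0} ⊆ closure (G '' Set.pi Set.univ t) := by
    intro v hv
    obtain ⟨p, hp⟩ := G_surj v hv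
    exact h2 ⟨p, Set.mem_univ p, hp⟩
  have hdense : Dense (G '' Set.pi Set.univ t) := by
    rw [← dense_closure]
    exact hne.mono hsub
  refine Dense.mono ?_ hdense
  rintro v ⟨p, hp, rfl⟩
  have hp0 := hp 0 (Set.mem_univ _)
  have hp1 := hp 1 (Set.mem_univ _)
  have hp2 := hp 2 (Set.mem_univ _)
  simp only [ht, Matrix.cons_val_zero, Matrix.cons_val_one, Matrix.head_cons,
    Matrix.cons_val_two, Matrix.tail_cons, Set.mem_diff, Set.mem_singleton_iff,
    Set.mem_range] at hp0 hp1 hp2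
  obtain ⟨⟨q0, hq0⟩, h0⟩ := hp0
  obtain ⟨⟨⟨⟨q1, hq1⟩, h1⟩, h1'⟩, h1''⟩ := hp1
  obtain ⟨q2, hq2⟩ := hp2
  simp only [Set.mem_setOf_eq]
  refine G_mem p ?_ h0 h1 h1' h1''
  intro i
  fin_cases i
  exacts [⟨q0, hq0.symm⟩, ⟨q1, hq1.symm⟩, ⟨q2, hq2.symm⟩]
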